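/- Let φ: (0,∞) → (0,∞) be C¹ with φ'(t)/t nonincreasing, and suppose φ(t)/(log t)³ is increasing to +∞. Then t³ ∫_t^∞ φ(ξ)/ξ⁴ dξ ≤ (1/3)(φ(t) + tφ'(t)), and moreover tφ'(t)/φ(t)^{2/3} ≥ 3 φ(t)^{1/3}/log t → ∞, hence lim_{t→∞} tφ'(t) / (t³∫_t^∞ φ(ξ)/ξ⁴ dξ)^{2/3} = +∞. -/

import Mathlib

open Set Filter MeasureTheory Topology

/-- If `F` is monotone on `Ioi e` and has derivative `d` at a point `t > e`, then `d ≥ 0`. -/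
lemma aux_deriv_nonneg_of_monotoneOn {F : ℝ → ℝ} {d e t : ℝ}
    (hm : MonotoneOn F (Ioi e)) (ht : e < t) (hF : HasDerivAt F d t) : 0 ≤ d := by
  have h1 : Tendsto (slope F t) (𝓝[>] t) (𝓝 d) :=
    (hasDerivAt_iff_tendsto_slope.1 hF).mono_left
      (nhdsWithin_mono t fun s hs => ne_of_gt hs)
  refine ge_of_tendsto h1 ?_
  filter_upwards [self_mem_nhdsWithin] with s hs
  have hts : t < s := hs
  have hFle : F t ≤ F s := hm (mem_Ioi.2 ht) (mem_Ioi.2 (ht.trans hts)) hts.le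
  have : 0 ≤ (F s - F t) / (s - t) := div_nonneg (by linarith) (by linarith)
  simpa [slope_def_field] using this

theorem stmt17 (φ φ' : ℝ → ℝ)
    (hpos : ∀ t > Real.exp 1, 0 < φ t)
    (hderiv : ∀ t > Real.exp 1, HasDerivAt φ (φ' t) t)
    (hcont : ContinuousOn φ' (Ioi (Real.exp 1)))
    (hratio : AntitoneOn (fun t => φ' t / t) (Ioi (Real.exp 1)))
    (hlogmono : MonotoneOn (fun t => φ t / (Real.log t) ^ 3) (Ioi (Real.exp 1)))
    (hlogtop : Tendsto (fun t => φ t / (Real.log t) ^ 3) atTop atTop)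
    (hint : ∀ t > Real.exp 1, IntegrableOn (fun ξ => φ ξ / ξ ^ 4) (Ioi t)) :
    (∀ t > Real.exp 1,
      t ^ 3 * (∫ ξ in Ioi t, φ ξ / ξ ^ 4) ≤ (1 / 3) * (φ t + t * φ' t)) ∧
    (∀ t > Real.exp 1,
      t * φ' t / (φ t) ^ ((2:ℝ)/3) ≥ 3 * (φ t) ^ ((1:ℝ)/3) / Real.log t) ∧
    Tendsto (fun t => t * φ' t / (t ^ 3 * ∫ ξ in Ioi t, φ ξ / ξ ^ 4) ^ ((2:ℝ)/3))
      atTop atTop := by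
  have he : (0:ℝ) < Real.exp 1 := Real.exp_pos 1
  -- core of part 2
  have key2 : ∀ t > Real.exp 1, 3 * φ t / Real.log t ≤ t * φ' t := by
    intro t ht
    have ht0 : 0 < t := he.trans ht
    have hL : 1 < Real.log t := by
      rw [← Real.log_exp 1]; exact Real.log_lt_log he ht
    have hL0 : 0 < Real.log t := by linarith
    have hlog : HasDerivAt Real.log t⁻¹ t := Real.hasDerivAt_log (ne_of_gt ht0)
    have hcube : HasDerivAt (fun s => (Real.log s) ^ 3)
        (3 * (Real.log t) ^ 2 * t⁻¹) t := by
      have := hlog.pow 3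
      norm_num at this
      exact this
    have hF : HasDerivAt (fun s => φ s / (Real.log s) ^ 3)
        ((φ' t * (Real.log t) ^ 3 - φ t * (3 * (Real.log t) ^ 2 * t⁻¹)) /
          ((Real.log t) ^ 3) ^ 2) t :=
      (hderiv t ht).div hcube (by positivity)
    have hd : 0 ≤ (φ' t * (Real.log t) ^ 3 - φ t * (3 * (Real.log t) ^ 2 * t⁻¹)) /
        ((Real.log t) ^ 3) ^ 2 := aux_deriv_nonneg_of_monotoneOn hlogmono ht hF
    have hD2 : (0:ℝ) < ((Real.log t) ^ 3) ^ 2 := by positivity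
    have hN : 0 ≤ φ' t * (Real.log t) ^ 3 - φ t * (3 * (Real.log t) ^ 2 * t⁻¹) := by
      by_contra hcon
      push_neg at hcon
      have := div_neg_of_neg_of_pos hcon hD2
      linarith
    rw [div_le_iff₀ hL0]
    have h1 : 0 ≤ t * (φ' t * (Real.log t) ^ 3 - φ t * (3 * (Real.log t) ^ 2 * t⁻¹)) :=
      mul_nonneg ht0.le hN
    have h2 : t * (φ t * (3 * (Real.log t) ^ 2 * t⁻¹)) = 3 * φ t * (Real.log t) ^ 2 := by
      field_simp
    have h3 : 0 ≤ (t * φ' t * Real.log t - 3 * φ t) * (Real.log t) ^ 2 := by nlinarith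
    have hL2 : 0 < (Real.log t) ^ 2 := by positivity
    nlinarith
  -- part 1
  have key1 : ∀ t > Real.exp 1,
      t ^ 3 * (∫ ξ in Ioi t, φ ξ / ξ ^ 4) ≤ (1 / 3) * (φ t + t * φ' t) := by
    intro t ht
    have ht0 : 0 < t := he.trans ht
    -- the pointwise bound φ ξ ≤ φ t + (φ' t / t) * (ξ² - t²)/2
    have hgc : ∀ s ∈ Ici t, HasDerivAt
        (fun s => φ t + (φ' t / t) * (s ^ 2 - t ^ 2) / 2 - φ s)
        ((φ' t / t) * s - φ' s) s := by
      intro s hs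
      have hse : Real.exp 1 < s := ht.trans_le hs
      have hp : HasDerivAt (fun s : ℝ => s ^ 2) (2 * s) s := by
        simpa using hasDerivAt_pow 2 s
      have h2 : HasDerivAt (fun s : ℝ => φ t + (φ' t / t) * (s ^ 2 - t ^ 2) / 2)
          ((φ' t / t) * s) s := by
        have := (((hp.sub_const (t ^ 2)).const_mul (φ' t / t)).div_const 2).const_add (φ t)
        refine this.congr_deriv ?_
        ring
      exact h2.sub (hderiv s hse)
    have hmg : MonotoneOn
        (fun s => φ t + (φ' t / t) * (s ^ 2 - t ^ 2) / 2 - φ s) (Ici t) := by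
      apply monotoneOn_of_deriv_nonneg (convex_Ici t)
      · exact fun s hs => (hgc s hs).continuousAt.continuousWithinAt
      · rw [interior_Ici]
        exact fun s hs => (hgc s (mem_Ici.2 (le_of_lt hs))).differentiableAt.differentiableWithinAt
      · rw [interior_Ici]
        intro s hs
        rw [(hgc s (mem_Ici.2 (le_of_lt hs))).deriv]
        have hse : Real.exp 1 < s := ht.trans hs
        have hcs : φ' s / s ≤ φ' t / t :=
          hratio (mem_Ioi.2 ht) (mem_Ioi.2 hse) (le_of_lt hs)
        have hs0 : 0 < s := ht0.trans hs
        have : φ' s ≤ (φ' t / t) * s := by rwa [div_le_iff₀ hs0] at hcs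
        linarith
    have key : ∀ ξ ∈ Ioi t, φ ξ ≤ φ t + (φ' t / t) * (ξ ^ 2 - t ^ 2) / 2 := by
      intro ξ hξ
      have hξt : t < ξ := hξ
      have h0 := hmg (self_mem_Ici (a := t)) (mem_Ici.2 hξt.le) hξt.le
      simp only [sub_self, mul_zero, zero_div, add_zero] at h0
      linarith
    -- integrable majorant
    have hA : IntegrableOn (fun ξ : ℝ => ξ ^ (-4 : ℝ)) (Ioi t) :=
      integrableOn_Ioi_rpow_of_lt (by norm_num) ht0
    have hB : IntegrableOn (fun ξ : ℝ => ξ ^ (-2 : ℝ)) (Ioi t) :=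
      integrableOn_Ioi_rpow_of_lt (by norm_num) ht0
    have hInt_h : IntegrableOn
        (fun ξ : ℝ => (φ t - φ' t / t / 2 * t ^ 2) * ξ ^ (-4 : ℝ)
          + (φ' t / t / 2) * ξ ^ (-2 : ℝ)) (Ioi t) :=
      (hA.const_mul _).add (hB.const_mul _)
    have mono : ∀ ξ ∈ Ioi t, φ ξ / ξ ^ 4 ≤
        (φ t - φ' t / t / 2 * t ^ 2) * ξ ^ (-4 : ℝ)
          + (φ' t / t / 2) * ξ ^ (-2 : ℝ) := by
      intro ξ hξ
      have hξt : t < ξ := hξ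
      have hξ0 : 0 < ξ := ht0.trans hξt
      have hA4 : ξ ^ (-4 : ℝ) = (ξ ^ 4)⁻¹ := by
        rw [show (-4 : ℝ) = -(4 : ℕ) by norm_num, Real.rpow_neg hξ0.le, Real.rpow_natCast]
      have hA2 : ξ ^ (-2 : ℝ) = (ξ ^ 2)⁻¹ := by
        rw [show (-2 : ℝ) = -(2 : ℕ) by norm_num, Real.rpow_neg hξ0.le, Real.rpow_natCast]
      have hkey := key ξ hξ
      have step : φ ξ / ξ ^ 4 ≤ (φ t + (φ' t / t) * (ξ ^ 2 - t ^ 2) / 2) / ξ ^ 4 := by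
        gcongr
      refine step.trans (le_of_eq ?_)
      rw [hA4, hA2]
      field_simp
      ring
    have hle : (∫ ξ in Ioi t, φ ξ / ξ ^ 4) ≤
        ∫ ξ in Ioi t, ((φ t - φ' t / t / 2 * t ^ 2) * ξ ^ (-4 : ℝ)
          + (φ' t / t / 2) * ξ ^ (-2 : ℝ)) :=
      setIntegral_mono_on (hint t ht) hInt_h measurableSet_Ioi mono
    have hIA : (∫ ξ in Ioi t, ξ ^ (-4 : ℝ)) = t ^ (-3 : ℝ) / 3 := by
      rw [integral_Ioi_rpow_of_lt (by norm_num) ht0]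
      norm_num
    have hIB : (∫ ξ in Ioi t, ξ ^ (-2 : ℝ)) = t ^ (-1 : ℝ) := by
      rw [integral_Ioi_rpow_of_lt (by norm_num) ht0]
      norm_num
    have hIh : (∫ ξ in Ioi t, ((φ t - φ' t / t / 2 * t ^ 2) * ξ ^ (-4 : ℝ)
        + (φ' t / t / 2) * ξ ^ (-2 : ℝ)))
        = (φ t - φ' t / t / 2 * t ^ 2) * (t ^ (-3 : ℝ) / 3)
          + (φ' t / t / 2) * t ^ (-1 : ℝ) := by
      rw [integral_add (hA.const_mul _) (hB.const_mul _), integral_const_mul,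
        integral_const_mul, hIA, hIB]
    have h3 : t ^ (-3 : ℝ) = (t ^ 3)⁻¹ := by
      rw [show (-3 : ℝ) = -(3 : ℕ) by norm_num, Real.rpow_neg ht0.le, Real.rpow_natCast]
    have h1 : t ^ (-1 : ℝ) = t⁻¹ := by
      rw [show (-1 : ℝ) = -(1 : ℕ) by norm_num, Real.rpow_neg ht0.le, Real.rpow_natCast,
        pow_one]
    have hfin : t ^ 3 * ((φ t - φ' t / t / 2 * t ^ 2) * (t ^ (-3 : ℝ) / 3)
        + (φ' t / t / 2) * t ^ (-1 : ℝ)) = (1 / 3) * (φ t + t * φ' t) := by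
      rw [h3, h1]
      field_simp
      ring
    calc t ^ 3 * (∫ ξ in Ioi t, φ ξ / ξ ^ 4)
        ≤ t ^ 3 * ∫ ξ in Ioi t, ((φ t - φ' t / t / 2 * t ^ 2) * ξ ^ (-4 : ℝ)
            + (φ' t / t / 2) * ξ ^ (-2 : ℝ)) := by
          exact mul_le_mul_of_nonneg_left hle (by positivity)
      _ = (1 / 3) * (φ t + t * φ' t) := by rw [hIh]; exact hfin
  -- positivity of the integral
  have ipos : ∀ t > Real.exp 1, 0 < ∫ ξ in Ioi t, φ ξ / ξ ^ 4 := by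
    intro t ht
    have ht0 : 0 < t := he.trans ht
    refine (setIntegral_pos_iff_support_of_nonneg_ae ?_ (hint t ht)).2 ?_
    · filter_upwards [ae_restrict_mem measurableSet_Ioi] with ξ hξ
      have hξ0 : 0 < ξ := ht0.trans hξ
      exact div_nonneg (hpos ξ (ht.trans hξ)).le (by positivity)
    · have hsub : Ioi t ⊆ Function.support (fun ξ => φ ξ / ξ ^ 4) ∩ Ioi t := by
        intro ξ hξ
        have hξ0 : 0 < ξ := ht0.trans hξ
        exact ⟨ne_of_gt (div_pos (hpos ξ (ht.trans hξ)) (by positivity)), hξ⟩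
      refine lt_of_lt_of_le ?_ (measure_mono hsub)
      rw [Real.volume_Ioi]
      exact ENNReal.zero_lt_top
  -- part 2 in the stated form
  have part2 : ∀ t > Real.exp 1,
      t * φ' t / (φ t) ^ ((2:ℝ)/3) ≥ 3 * (φ t) ^ ((1:ℝ)/3) / Real.log t := by
    intro t ht
    have hP : 0 < φ t := hpos t ht
    have hL : 1 < Real.log t := by
      rw [← Real.log_exp 1]; exact Real.log_lt_log he ht
    have hL0 : 0 < Real.log t := by linarith
    have hP23 : 0 < (φ t) ^ ((2:ℝ)/3) := Real.rpow_pos_of_pos hP _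
    rw [ge_iff_le, div_le_div_iff₀ hL0 hP23]
    have hid : (φ t) ^ ((1:ℝ)/3) * (φ t) ^ ((2:ℝ)/3) = φ t := by
      rw [← Real.rpow_add hP]; norm_num
    have hk := key2 t ht
    rw [div_le_iff₀ hL0] at hk
    calc 3 * (φ t) ^ ((1:ℝ)/3) * (φ t) ^ ((2:ℝ)/3)
        = 3 * φ t := by rw [mul_assoc, hid]
      _ ≤ t * φ' t * Real.log t := hk
  refine ⟨key1, part2, ?_⟩
  -- part 3
  have bound : ∀ t > Real.exp 1,
      (φ t / (Real.log t) ^ 3) ^ ((1:ℝ)/3)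
        ≤ t * φ' t / (t ^ 3 * ∫ ξ in Ioi t, φ ξ / ξ ^ 4) ^ ((2:ℝ)/3) := by
    intro t ht
    have ht0 : 0 < t := he.trans ht
    have hP : 0 < φ t := hpos t ht
    have hL : 1 < Real.log t := by
      rw [← Real.log_exp 1]; exact Real.log_lt_log he ht
    have hL0 : 0 < Real.log t := by linarith
    have hI0 : 0 < t ^ 3 * ∫ ξ in Ioi t, φ ξ / ξ ^ 4 :=
      mul_pos (by positivity) (ipos t ht)
    set I := t ^ 3 * ∫ ξ in Ioi t, φ ξ / ξ ^ 4 with hIdef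
    have hIle : I ≤ (1/3) * (φ t + t * φ' t) := key1 t ht
    have ha : 3 * φ t / Real.log t ≤ t * φ' t := key2 t ht
    have ha0 : 0 < t * φ' t := lt_of_lt_of_le (by positivity) ha
    have hX0 : (0:ℝ) ≤ φ t / (Real.log t) ^ 3 := by positivity
    have hPLa : φ t ≤ t * φ' t * Real.log t := by
      rw [div_le_iff₀ hL0] at ha
      nlinarith
    rcases le_total (t * φ' t) (φ t) with hc | hc
    · -- case a ≤ P
      have hIP : I ≤ φ t := by linarith
      have h23 : I ^ ((2:ℝ)/3) ≤ (φ t) ^ ((2:ℝ)/3) :=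
        Real.rpow_le_rpow hI0.le hIP (by norm_num)
      have hI23 : 0 < I ^ ((2:ℝ)/3) := Real.rpow_pos_of_pos hI0 _
      have hP23 : 0 < (φ t) ^ ((2:ℝ)/3) := Real.rpow_pos_of_pos hP _
      have step1 : t * φ' t / (φ t) ^ ((2:ℝ)/3) ≤ t * φ' t / I ^ ((2:ℝ)/3) := by
        gcongr
      have hx : (φ t / (Real.log t) ^ 3) ^ ((1:ℝ)/3)
          = (φ t) ^ ((1:ℝ)/3) / Real.log t := by
        rw [Real.div_rpow hP.le (by positivity), ← Real.rpow_natCast (Real.log t) 3,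
          ← Real.rpow_mul hL0.le]
        norm_num
      have step2 : (φ t) ^ ((1:ℝ)/3) / Real.log t ≤ t * φ' t / (φ t) ^ ((2:ℝ)/3) := by
        rw [div_le_div_iff₀ hL0 hP23]
        have hid : (φ t) ^ ((1:ℝ)/3) * (φ t) ^ ((2:ℝ)/3) = φ t := by
          rw [← Real.rpow_add hP]; norm_num
        rw [hid]
        exact hPLa
      rw [hx]
      linarith
    · -- case P ≤ a
      have hIa : I ≤ t * φ' t := by linarith
      have h23 : I ^ ((2:ℝ)/3) ≤ (t * φ' t) ^ ((2:ℝ)/3) :=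
        Real.rpow_le_rpow hI0.le hIa (by norm_num)
      have hI23 : 0 < I ^ ((2:ℝ)/3) := Real.rpow_pos_of_pos hI0 _
      have ha23 : 0 < (t * φ' t) ^ ((2:ℝ)/3) := Real.rpow_pos_of_pos ha0 _
      have step1 : t * φ' t / (t * φ' t) ^ ((2:ℝ)/3) ≤ t * φ' t / I ^ ((2:ℝ)/3) := by
        gcongr
      have hself : t * φ' t / (t * φ' t) ^ ((2:ℝ)/3) = (t * φ' t) ^ ((1:ℝ)/3) := by
        rw [show (1:ℝ)/3 = 1 - (2:ℝ)/3 by norm_num, Real.rpow_sub ha0, Real.rpow_one]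
      have hL3 : 1 ≤ (Real.log t) ^ 3 := one_le_pow₀ hL.le
      have hXP : φ t / (Real.log t) ^ 3 ≤ t * φ' t :=
        le_trans (div_le_self hP.le hL3) hc
      have step2 : (φ t / (Real.log t) ^ 3) ^ ((1:ℝ)/3) ≤ (t * φ' t) ^ ((1:ℝ)/3) :=
        Real.rpow_le_rpow hX0 hXP (by norm_num)
      calc (φ t / (Real.log t) ^ 3) ^ ((1:ℝ)/3)
          ≤ (t * φ' t) ^ ((1:ℝ)/3) := step2
        _ = t * φ' t / (t * φ' t) ^ ((2:ℝ)/3) := hself.symm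
        _ ≤ t * φ' t / I ^ ((2:ℝ)/3) := step1
  have h13 : Tendsto (fun t => (φ t / (Real.log t) ^ 3) ^ ((1:ℝ)/3)) atTop atTop :=
    (tendsto_rpow_atTop (by norm_num : (0:ℝ) < 1/3)).comp hlogtop
  refine tendsto_atTop_mono' atTop ?_ h13
  filter_upwards [eventually_gt_atTop (Real.exp 1)] with t ht
  exact bound t ht
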